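/- Let X be a random variable on (0,1) with density 2x with respect to Lebesgue measure (i.e., the normalized density e^{-V(x)} for the 1-exp-concave potential V(x) = −log x on (0,1)). Then for every λ > 0, E[ exp( λ (V(X) − E V(X))² ) ] = ∞; that is, the information content admits no sub-Gaussian moment generating function bound. -/
import Mathlib


open MeasureTheory Real

lemma aux_lintegral_inv_top {δ : ℝ} (hδ : 0 < δ) :
    ∫⁻ x in Set.Ioo (0 : ℝ) δ, ENNReal.ofReal x⁻¹ = ⊤ := by
  by_contra h
  have hfin : ∫⁻ x in Set.Ioo (0 : ℝ) δ, ENNReal.ofReal x⁻¹ < ⊤ := lt_top_iff_ne_top.2 h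
  have hint : IntegrableOn (fun x : ℝ => x⁻¹) (Set.Ioo 0 δ) := by
    constructor
    · exact (measurable_inv.aestronglyMeasurable)
    · rw [hasFiniteIntegral_iff_ofReal]
      · exact hfin
      · filter_upwards [ae_restrict_mem measurableSet_Ioo] with x hx
        exact le_of_lt (inv_pos.2 hx.1)
  have hint2 : IntervalIntegrable (fun x : ℝ => x⁻¹) volume 0 δ := by
    rw [intervalIntegrable_iff_integrableOn_Ioo_of_le hδ.le]
    exact hint
  rw [intervalIntegrable_inv_iff] at hint2
  rcases hint2 with h1 | h2
  · exact hδ.ne h1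
  · exact h2 (Set.left_mem_uIcc)

/-- For the distribution on `(0,1)` with density `2x` (the log-concave
measure of the `1`-exp-concave potential `V(x) = -log x`), the information content has no
sub-Gaussian moment generating function: `E exp(λ (V - E V)²) = ∞` for every `λ > 0`. -/
theorem no_subgaussian_information_concentration
    (μ : Measure ℝ)
    (hμ : μ = (volume.restrict (Set.Ioo (0 : ℝ) 1)).withDensity fun x =>
      ENNReal.ofReal (2 * x))
    (V : ℝ → ℝ) (hV : ∀ x, V x = -Real.log x)
    (lam : ℝ) (hlam : 0 < lam) :
    ∫⁻ x, ENNReal.ofReal (Real.exp (lam * (V x - ∫ y, V y ∂μ) ^ 2)) ∂μ = ⊤ := by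
  set m : ℝ := ∫ y, V y ∂μ with hm
  rw [hμ]
  rw [lintegral_withDensity_eq_lintegral_mul_non_measurable _
    (by fun_prop) (by filter_upwards with x using ENNReal.ofReal_lt_top)]
  -- choose threshold
  set T : ℝ := max (max (2 * |m|) (8 / lam)) 1 with hT
  have hT1 : (1 : ℝ) ≤ T := le_max_right _ _
  have hTm : 2 * |m| ≤ T := le_trans (le_max_left _ _) (le_max_left _ _)
  have hTl : 8 / lam ≤ T := le_trans (le_max_right _ _) (le_max_left _ _)
  set δ : ℝ := Real.exp (-T) with hδdef
  have hδ0 : 0 < δ := Real.exp_pos _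
  have hδ1 : δ < 1 := by
    rw [hδdef, Real.exp_lt_one_iff]
    linarith
  -- key pointwise bound on (0, δ)
  have key : ∀ x ∈ Set.Ioo (0 : ℝ) δ,
      ENNReal.ofReal x⁻¹ ≤
        (ENNReal.ofReal (2 * x)) * ENNReal.ofReal (Real.exp (lam * (V x - m) ^ 2)) := by
    intro x hx
    have hx0 : 0 < x := hx.1
    have hlog : -Real.log x > T := by
      have : Real.log x < Real.log δ := Real.log_lt_log hx0 hx.2
      rw [hδdef, Real.log_exp] at this
      linarith
    set t : ℝ := -Real.log x with ht
    have ht0 : 0 < t := lt_of_lt_of_le (by linarith) hlog.le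
    -- (t - m)^2 ≥ t^2/4
    have h1 : t / 2 ≤ t - m := by
      have : |m| ≤ t / 2 := by
        have : 2 * |m| ≤ t := le_trans hTm hlog.le
        linarith
      have := le_abs_self m
      linarith
    have hsq : t ^ 2 / 4 ≤ (t - m) ^ 2 := by nlinarith
    have hexp : lam * (t - m) ^ 2 ≥ 2 * t := by
      have h8 : 8 / lam ≤ t := le_trans hTl hlog.le
      have h8' : 8 ≤ lam * t := by
        rw [div_le_iff₀ hlam] at h8; linarith
      nlinarith [sq_nonneg t]
    -- x = exp(-t)
    have hxexp : x = Real.exp (-t) := by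
      rw [ht, neg_neg, Real.exp_log hx0]
    rw [← ENNReal.ofReal_mul (by positivity)]
    apply ENNReal.ofReal_le_ofReal
    have hVx : V x - m = t - m := by rw [hV x]
    rw [hVx, hxexp, ← Real.exp_neg, neg_neg, mul_assoc, ← Real.exp_add]
    have h2 : Real.exp t ≤ Real.exp (-t + lam * (t - m) ^ 2) :=
      Real.exp_le_exp.2 (by linarith)
    nlinarith [Real.exp_pos (-t + lam * (t - m) ^ 2)]
  -- now bound below
  have hsub : Set.Ioo (0 : ℝ) δ ⊆ Set.Ioo (0 : ℝ) 1 := Set.Ioo_subset_Ioo le_rfl hδ1.le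
  have hbig : ∫⁻ x in Set.Ioo (0 : ℝ) δ, ENNReal.ofReal x⁻¹ ≤
      ∫⁻ x in Set.Ioo (0 : ℝ) 1,
        (ENNReal.ofReal (2 * x)) * ENNReal.ofReal (Real.exp (lam * (V x - m) ^ 2)) := by
    calc ∫⁻ x in Set.Ioo (0 : ℝ) δ, ENNReal.ofReal x⁻¹
        ≤ ∫⁻ x in Set.Ioo (0 : ℝ) δ,
          (ENNReal.ofReal (2 * x)) * ENNReal.ofReal (Real.exp (lam * (V x - m) ^ 2)) := by
          have hVm : Measurable V := by
            have hVeq : V = fun x => -Real.log x := funext hV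
            rw [hVeq]; exact Real.measurable_log.neg
          apply setLIntegral_mono_ae
          · exact (((measurable_const.mul measurable_id).ennreal_ofReal).mul
              ((Real.measurable_exp.comp
                (((hVm.sub measurable_const).pow_const 2).const_mul lam)).ennreal_ofReal)).aemeasurable
          · filter_upwards with x hx using key x hx
      _ ≤ _ := lintegral_mono_set hsub
  rw [aux_lintegral_inv_top hδ0] at hbig
  exact top_le_iff.1 hbig
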